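/- Let k ∈ {1, 2, 3}, a > 0, c ≠ 0, σ ≤ μ, σ < −μ, and δ ∈ (0, |a/c|). If sup over û ∈ [−δ, −δμ/σ] of I(û, δ, |c|, k) is less than δ (i.e. P(δ,c,k) < δ), then sup over û ∈ [−δ, −δμ/σ] of I(û, δ, −|c|, k) is also less than δ. -/

import Mathlib

open MeasureTheory intervalIntegral Set


/-- The constant `D₁ = (|μ|+|σ|)(1 + (|μ|+|σ|)|c|δ)`. -/
noncomputable def D1 (μ σ c δ : ℝ) : ℝ := (|μ| + |σ|) * (1 + (|μ| + |σ|) * |c| * δ)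

/-- The constant `D₂ = (D₁² + (|μ|+|σ|)³|c|δ)(1 + |σc|δ)`. -/
noncomputable def D2 (μ σ c δ : ℝ) : ℝ :=
  ((D1 μ σ c δ) ^ 2 + (|μ| + |σ|) ^ 3 * |c| * δ) * (1 + |σ * c| * δ)

/-- The profile `η̄` used to define `η_{(3)}`. -/
noncomputable def etabar (δ d1 d2 s : ℝ) : ℝ :=
  if s ≤ 0 then -δ
  else if s < d1 / d2 then -δ + δ * d2 / 2 * s ^ 2
  else -δ - δ * d1 ^ 2 / (2 * d2) + δ * d1 * s

/-- The shift `θ_shift` used to define `η_{(3)}`. -/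
noncomputable def thetaShift (δ d1 d2 uh : ℝ) : ℝ :=
  if uh ≤ -δ + δ * d1 ^ 2 / (2 * d2) then Real.sqrt (2 * (uh + δ) / (d2 * δ))
  else (uh + δ + δ * d1 ^ 2 / (2 * d2)) / (d1 * δ)

/-- The extremal forcing functions `η_{(k)}` for `k = 1, 2, 3`. -/
noncomputable def etaK (μ σ c δ uh : ℝ) : ℕ → ℝ → ℝ
  | 1, θ => if θ < 0 then -δ else uh
  | 2, θ => max (uh + D1 μ σ c δ * δ * θ) (-δ)
  | 3, θ => etabar δ (D1 μ σ c δ) (D2 μ σ c δ)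
      (θ + thetaShift δ (D1 μ σ c δ) (D2 μ σ c δ) uh)
  | _, _ => 0

/-- `I(û, δ, ĉ, k) = û e^{μ(a+ĉδ)} + σ ∫_{-(a+ĉδ)}^{0} e^{-μθ} η_{(k)}(θ) dθ`
(the constants `D₁, D₂` in `η_{(k)}` are computed from `|c|`, while `ĉ` only enters
the integration limits). -/
noncomputable def Ifun (μ σ c a δ chat uh : ℝ) (k : ℕ) : ℝ :=
  uh * Real.exp (μ * (a + chat * δ)) +
    σ * ∫ θ in (-(a + chat * δ))..(0 : ℝ), Real.exp (-μ * θ) * etaK μ σ c δ uh k θ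

/-- `P(δ, c, k) = sup_{û ∈ [-δ, -μδ/σ]} I(û, δ, |c|, k)`. -/
noncomputable def Pfun (μ σ c a δ : ℝ) (k : ℕ) : ℝ :=
  sSup ((fun uh => Ifun μ σ c a δ |c| uh k) '' Set.Icc (-δ) (-μ * δ / σ))

/-- `r = a + |c|δ`. -/
noncomputable def rr (a c δ : ℝ) : ℝ := a + |c| * δ

/-- The explicit one-piece integral `I₁(û, δ)` (for `μ ≠ 0`). -/
noncomputable def I1fun (μ σ c a δ uh : ℝ) : ℝ :=
  uh * (Real.exp (μ * rr a c δ) + σ / μ * (Real.exp (μ * rr a c δ) - 1)) +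
    σ / μ * D1 μ σ c δ * δ *
      (1 / μ * (Real.exp (μ * rr a c δ) - 1) - rr a c δ * Real.exp (μ * rr a c δ))

/-- The explicit two-piece integral `I₂(û, δ)` (for `μ ≠ 0`). -/
noncomputable def I2fun (μ σ c a δ uh : ℝ) : ℝ :=
  uh * (Real.exp (μ * rr a c δ) - σ / μ) +
    σ / μ * δ * (D1 μ σ c δ / μ *
      (Real.exp (μ * (δ + uh) / (D1 μ σ c δ * δ)) - 1) - Real.exp (μ * rr a c δ))

lemma etabar_nonneg_slope {δ d1 d2 t : ℝ} (hδ : 0 ≤ δ) (hd1 : 0 < d1) (hd2 : 0 < d2)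
    (ht : d1 / d2 ≤ t) : δ * d1 ^ 2 / d2 ≤ δ * d1 * t := by
  rw [div_le_iff₀ hd2]
  have h := (div_le_iff₀ hd2).mp ht
  nlinarith [mul_le_mul_of_nonneg_left h (mul_nonneg hδ hd1.le)]

lemma etabar_eval_high {δ d1 d2 t : ℝ} (hd1 : 0 < d1) (hd2 : 0 < d2) (ht : d1 / d2 ≤ t) :
    etabar δ d1 d2 t = -δ - δ * d1 ^ 2 / (2 * d2) + δ * d1 * t := by
  have hq : 0 < d1 / d2 := div_pos hd1 hd2
  unfold etabar
  rw [if_neg (by linarith), if_neg (by linarith)]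

lemma halfdiv (δ d1 d2 : ℝ) : δ * d1 ^ 2 / (2 * d2) = δ * d1 ^ 2 / d2 / 2 := by
  rw [div_div, mul_comm d2 2]

lemma etabar_mono {δ d1 d2 : ℝ} (hδ : 0 ≤ δ) (hd1 : 0 < d1) (hd2 : 0 < d2) :
    Monotone (etabar δ d1 d2) := by
  intro s t hst
  have hq : 0 < d1 / d2 := div_pos hd1 hd2
  have hlow : ∀ u : ℝ, -δ ≤ etabar δ d1 d2 u := by
    intro u
    unfold etabar
    split_ifs with h1 h2
    · exact le_refl _
    · have : 0 ≤ δ * d2 / 2 * u ^ 2 := by positivity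
      linarith
    · push_neg at h1 h2
      have h3 := etabar_nonneg_slope hδ hd1 hd2 h2
      have h4 : 0 ≤ δ * d1 ^ 2 / d2 := by positivity
      rw [halfdiv]
      linarith
  rcases le_or_gt s 0 with h1 | h1
  · rw [show etabar δ d1 d2 s = -δ by unfold etabar; rw [if_pos h1]]
    exact hlow t
  rcases lt_or_ge s (d1 / d2) with h2 | h2
  · -- s in middle
    have hes : etabar δ d1 d2 s = -δ + δ * d2 / 2 * s ^ 2 := by
      unfold etabar; rw [if_neg (by linarith), if_pos h2]
    rcases lt_or_ge t (d1 / d2) with h3 | h3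
    · have het : etabar δ d1 d2 t = -δ + δ * d2 / 2 * t ^ 2 := by
        unfold etabar; rw [if_neg (by linarith), if_pos h3]
      rw [hes, het]
      have hs0 : 0 < s := h1
      have h4 : s ^ 2 ≤ t ^ 2 := by nlinarith [mul_nonneg (sub_nonneg.2 hst) (by linarith : (0:ℝ) ≤ t + s)]
      have h5 := mul_le_mul_of_nonneg_left h4 (show (0:ℝ) ≤ δ * d2 / 2 by positivity)
      linarith
    · rw [hes, etabar_eval_high hd1 hd2 h3]
      have e0 : s ^ 2 ≤ d1 / d2 * s := by
        nlinarith [mul_le_mul_of_nonneg_right h2.le h1.le]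
      have e1 : δ * d2 / 2 * s ^ 2 ≤ δ * d2 / 2 * (d1 / d2 * s) :=
        mul_le_mul_of_nonneg_left e0 (by positivity)
      have e2 : δ * d2 / 2 * (d1 / d2 * s) = δ * d1 * s / 2 := by
        field_simp
      have e3 : δ * d1 * s / 2 ≤ δ * d1 * t / 2 := by
        nlinarith [mul_le_mul_of_nonneg_left hst (mul_nonneg hδ hd1.le)]
      have e4 := etabar_nonneg_slope hδ hd1 hd2 h3
      rw [halfdiv]
      linarith
  · -- s high, hence t high
    have h3 : d1 / d2 ≤ t := le_trans h2 hst
    rw [etabar_eval_high hd1 hd2 h2, etabar_eval_high hd1 hd2 h3]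
    have := mul_le_mul_of_nonneg_left hst (mul_nonneg hδ hd1.le)
    linarith

lemma etabar_lb {δ d1 d2 : ℝ} (hδ : 0 ≤ δ) (hd1 : 0 < d1) (hd2 : 0 < d2) (s : ℝ) :
    -δ ≤ etabar δ d1 d2 s := by
  unfold etabar
  split_ifs with h1 h2
  · exact le_refl _
  · have : 0 ≤ δ * d2 / 2 * s ^ 2 := by positivity
    linarith
  · push_neg at h1 h2
    have h3 := etabar_nonneg_slope hδ hd1 hd2 h2
    have h4 : 0 ≤ δ * d1 ^ 2 / d2 := by positivity
    rw [halfdiv]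
    linarith

lemma etabar_thetaShift {δ d1 d2 uh : ℝ} (hδ : 0 < δ) (hd1 : 0 < d1) (hd2 : 0 < d2)
    (huh : -δ ≤ uh) :
    etabar δ d1 d2 (thetaShift δ d1 d2 uh) = uh := by
  unfold thetaShift
  by_cases hcase : uh ≤ -δ + δ * d1 ^ 2 / (2 * d2)
  · rw [if_pos hcase]
    set x := Real.sqrt (2 * (uh + δ) / (d2 * δ)) with hx
    have harg : 0 ≤ 2 * (uh + δ) / (d2 * δ) := by
      apply div_nonneg (by linarith) (by positivity)
    have hx2 : x ^ 2 = 2 * (uh + δ) / (d2 * δ) := Real.sq_sqrt harg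
    rcases eq_or_lt_of_le huh with heq | hlt
    · have hz : x = 0 := by
        rw [hx, show 2 * (uh + δ) / (d2 * δ) = 0 by rw [← heq]; ring_nf, Real.sqrt_zero]
      rw [hz]; unfold etabar; rw [if_pos le_rfl, ← heq]
    · have hx0 : 0 < x := Real.sqrt_pos.mpr (by
        have : 0 < uh + δ := by linarith
        positivity)
      unfold etabar
      rw [if_neg (by linarith)]
      by_cases hxq : x < d1 / d2
      · rw [if_pos hxq, hx2]
        field_simp
        ring
      · rw [if_neg hxq]
        push_neg at hxq
        have h1 : d1 ^ 2 / d2 ^ 2 ≤ x ^ 2 := by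
          rw [div_le_iff₀ (by positivity)]
          have hdx : d1 ≤ x * d2 := (div_le_iff₀ hd2).mp hxq
          nlinarith [hdx, mul_pos hx0 hd2]
        rw [hx2] at h1
        have h2 : δ * d1 ^ 2 / (2 * d2) ≤ uh + δ := by
          rw [div_le_div_iff₀ (by positivity) (by positivity)] at h1
          rw [div_le_iff₀ (by positivity)]
          nlinarith
        have heq2 : uh + δ = δ * d1 ^ 2 / (2 * d2) := by linarith
        have hxeq : x = d1 / d2 := by
          have hsq : x ^ 2 = (d1 / d2) ^ 2 := by
            rw [hx2, heq2]
            field_simp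
          nlinarith [div_pos hd1 hd2]
        rw [hxeq]
        have heq2' : (uh + δ) * (2 * d2) = δ * d1 ^ 2 := by
          rw [heq2]; field_simp
        field_simp
        nlinarith [heq2', hd2]
  · rw [if_neg hcase]
    push_neg at hcase
    have hq0 : 0 < d1 / d2 := div_pos hd1 hd2
    have hq : d1 / d2 ≤ (uh + δ + δ * d1 ^ 2 / (2 * d2)) / (d1 * δ) := by
      rw [div_le_div_iff₀ hd2 (by positivity)]
      have h3 : δ * d1 ^ 2 / (2 * d2) < uh + δ := by linarith
      rw [div_lt_iff₀ (by positivity)] at h3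
      have e : δ * d1 ^ 2 / (2 * d2) * d2 = δ * d1 ^ 2 / 2 := by
        field_simp
      nlinarith [h3, e]
    rw [etabar_eval_high hd1 hd2 hq]
    field_simp
    ring

lemma exp_integral (μ uh a b : ℝ) :
    ∫ θ in a..b, μ * uh * Real.exp (-μ * θ)
      = uh * (Real.exp (-μ * a) - Real.exp (-μ * b)) := by
  have hd : ∀ x : ℝ, HasDerivAt (fun y => -uh * Real.exp (-μ * y))
      (μ * uh * Real.exp (-μ * x)) x := by
    intro x
    have h1 : HasDerivAt (fun y : ℝ => -μ * y) (-μ) x := by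
      simpa using (hasDerivAt_id x).const_mul (-μ)
    have h2 := h1.exp.const_mul (-uh)
    rw [show μ * uh * Real.exp (-μ * x) = -uh * (Real.exp (-μ * x) * -μ) by ring]
    exact h2
  rw [intervalIntegral.integral_eq_sub_of_hasDerivAt (fun x _ => hd x)
    (((by fun_prop : Continuous fun x => μ * uh * Real.exp (-μ * x)).intervalIntegrable _ _))]
  ring

lemma Gdiff (μ σ uh : ℝ) (η : ℝ → ℝ) (a b : ℝ)
    (hInt : IntervalIntegrable (fun θ => Real.exp (-μ * θ) * η θ) volume a b) :
    ∫ θ in a..b, Real.exp (-μ * θ) * (μ * uh + σ * η θ)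
      = uh * (Real.exp (-μ * a) - Real.exp (-μ * b))
        + σ * ∫ θ in a..b, Real.exp (-μ * θ) * η θ := by
  have h1 : ∀ θ : ℝ, Real.exp (-μ * θ) * (μ * uh + σ * η θ)
      = μ * uh * Real.exp (-μ * θ) + σ * (Real.exp (-μ * θ) * η θ) := fun θ => by ring
  rw [intervalIntegral.integral_congr (fun θ _ => h1 θ),
    intervalIntegral.integral_add ((by fun_prop : Continuous fun θ => μ * uh * Real.exp (-μ * θ)).intervalIntegrable _ _)
      (hInt.const_mul σ), exp_integral, intervalIntegral.integral_const_mul]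

lemma key (μ σ uh s t : ℝ) (η : ℝ → ℝ) (hσ : σ < 0)
    (hmono : ∀ θ₁ θ₂ : ℝ, θ₁ ≤ θ₂ → θ₂ ≤ 0 → η θ₁ ≤ η θ₂)
    (hs : 0 ≤ s) (hst : s ≤ t)
    (hInt : IntervalIntegrable (fun θ => Real.exp (-μ * θ) * η θ) volume (-t) 0) :
    uh * Real.exp (μ * s) + σ * ∫ θ in (-s)..0, Real.exp (-μ * θ) * η θ
      ≤ max uh (uh * Real.exp (μ * t) + σ * ∫ θ in (-t)..0, Real.exp (-μ * θ) * η θ) := by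
  by_contra hcon
  push_neg at hcon
  rw [max_lt_iff] at hcon
  obtain ⟨hA, hB⟩ := hcon
  have hsub1 : Set.uIcc (-s) (0:ℝ) ⊆ Set.uIcc (-t) 0 := by
    rw [Set.uIcc_of_le (by linarith : -s ≤ (0:ℝ)), Set.uIcc_of_le (by linarith : -t ≤ (0:ℝ))]
    exact Set.Icc_subset_Icc (by linarith) le_rfl
  have hsub2 : Set.uIcc (-t) (-s) ⊆ Set.uIcc (-t) 0 := by
    rw [Set.uIcc_of_le (by linarith : -t ≤ -s), Set.uIcc_of_le (by linarith : -t ≤ (0:ℝ))]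
    exact Set.Icc_subset_Icc le_rfl (by linarith)
  have hInt1 := hInt.mono_set hsub1
  have hInt2 := hInt.mono_set hsub2
  have e1 : -μ * -s = μ * s := by ring
  have e2 : -μ * -t = μ * t := by ring
  have id1 := Gdiff μ σ uh η (-s) 0 hInt1
  have id2 := Gdiff μ σ uh η (-t) (-s) hInt2
  rw [e1] at id1
  rw [e1, e2] at id2
  simp only [mul_zero, Real.exp_zero] at id1
  -- positivity of the short integral
  have hpos1 : 0 < ∫ θ in (-s)..0, Real.exp (-μ * θ) * (μ * uh + σ * η θ) := by
    rw [id1]; linarith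
  -- hence the critical value is positive
  have hcrit : 0 < μ * uh + σ * η (-s) := by
    by_contra hc
    push_neg at hc
    have hnp : 0 ≤ ∫ θ in (-s)..0, -(Real.exp (-μ * θ) * (μ * uh + σ * η θ)) := by
      apply intervalIntegral.integral_nonneg (by linarith : -s ≤ (0:ℝ))
      intro u hu
      have h1 : η (-s) ≤ η u := hmono (-s) u hu.1 hu.2
      have h2 : σ * η u ≤ σ * η (-s) := mul_le_mul_of_nonpos_left h1 hσ.le
      have : μ * uh + σ * η u ≤ 0 := by linarith
      have := mul_nonpos_of_nonneg_of_nonpos (Real.exp_nonneg (-μ * u)) this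
      linarith
    rw [intervalIntegral.integral_neg] at hnp
    linarith
  -- nonnegativity on the long strip
  have hpos2 : 0 ≤ ∫ θ in (-t)..(-s), Real.exp (-μ * θ) * (μ * uh + σ * η θ) := by
    apply intervalIntegral.integral_nonneg (by linarith : -t ≤ -s)
    intro u hu
    have h1 : η u ≤ η (-s) := hmono u (-s) hu.2 (by linarith)
    have h2 : σ * η (-s) ≤ σ * η u := mul_le_mul_of_nonpos_left h1 hσ.le
    have : 0 ≤ μ * uh + σ * η u := by linarith
    positivity
  have hadd := intervalIntegral.integral_add_adjacent_intervals hInt2 hInt1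
  have hsplit : σ * ∫ θ in (-t)..0, Real.exp (-μ * θ) * η θ
      = σ * (∫ θ in (-t)..(-s), Real.exp (-μ * θ) * η θ)
        + σ * ∫ θ in (-s)..0, Real.exp (-μ * θ) * η θ := by
    rw [← hadd]; ring
  rw [id2] at hpos2
  linarith

section K

variable {μ σ c δ uh : ℝ}

lemma etaK_mono (hδ : 0 < δ) (hd1 : 0 < D1 μ σ c δ) (hd2 : 0 < D2 μ σ c δ)
    (huh : -δ ≤ uh) (k : ℕ) (hk : k = 1 ∨ k = 2 ∨ k = 3) :
    ∀ θ₁ θ₂ : ℝ, θ₁ ≤ θ₂ → θ₂ ≤ 0 → etaK μ σ c δ uh k θ₁ ≤ etaK μ σ c δ uh k θ₂ := by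
  intro θ₁ θ₂ h12 h20
  rcases hk with rfl | rfl | rfl
  · simp only [etaK]
    split_ifs with ha hb hb
    · exact le_refl _
    · exact huh
    · linarith
    · exact le_refl _
  · simp only [etaK]
    refine max_le_max ?_ (le_refl _)
    have h := mul_le_mul_of_nonneg_left h12 (show (0:ℝ) ≤ D1 μ σ c δ * δ by positivity)
    linarith
  · simp only [etaK]
    exact etabar_mono hδ.le hd1 hd2 (by linarith)

lemma etaK_bdd (hδ : 0 < δ) (hd1 : 0 < D1 μ σ c δ) (hd2 : 0 < D2 μ σ c δ)
    (huh : -δ ≤ uh) (huh2 : uh ≤ δ) (k : ℕ) (hk : k = 1 ∨ k = 2 ∨ k = 3) :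
    ∀ θ : ℝ, θ ≤ 0 → |etaK μ σ c δ uh k θ| ≤ δ := by
  intro θ hθ
  rw [abs_le]
  rcases hk with rfl | rfl | rfl
  · simp only [etaK]
    constructor
    · split_ifs with h
      · exact le_refl _
      · exact huh
    · split_ifs with h
      · linarith
      · exact huh2
  · simp only [etaK]
    constructor
    · exact le_max_right _ _
    · apply max_le _ (by linarith)
      have h : D1 μ σ c δ * δ * θ ≤ 0 :=
        mul_nonpos_of_nonneg_of_nonpos (by positivity) hθ
      linarith
  · simp only [etaK]
    constructor
    · exact etabar_lb hδ.le hd1 hd2 _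
    · calc etabar δ (D1 μ σ c δ) (D2 μ σ c δ) (θ + thetaShift δ (D1 μ σ c δ) (D2 μ σ c δ) uh)
          ≤ etabar δ (D1 μ σ c δ) (D2 μ σ c δ) (thetaShift δ (D1 μ σ c δ) (D2 μ σ c δ) uh) :=
            etabar_mono hδ.le hd1 hd2 (by linarith)
        _ = uh := etabar_thetaShift hδ hd1 hd2 huh
        _ ≤ δ := huh2

end K

/-- Lemma 4.6 of Humphries–Magpantay: if the supremum with integration
length `a + |c|δ` is below `δ`, so is the supremum with integration length `a - |c|δ`. -/
theorem stmt_12 (k : ℕ) (hk : k = 1 ∨ k = 2 ∨ k = 3)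
    (μ σ c a δ : ℝ) (ha : 0 < a) (hc : c ≠ 0)
    (h1 : σ ≤ μ) (h2 : σ < -μ)
    (hδ0 : 0 < δ) (hδ1 : δ < |a / c|)
    (hP : Pfun μ σ c a δ k < δ) :
    sSup ((fun uh => Ifun μ σ c a δ (-|c|) uh k) '' Set.Icc (-δ) (-μ * δ / σ)) < δ := by
  have hσ : σ < 0 := by linarith
  have habsσ : 0 < |σ| := abs_pos.2 (ne_of_lt hσ)
  have hc' : 0 < |c| := abs_pos.2 hc
  have hca : |c| * δ < a := by
    rw [abs_div, abs_of_pos ha] at hδ1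
    have := (lt_div_iff₀ hc').mp hδ1
    linarith
  have hd1 : 0 < D1 μ σ c δ := by
    unfold D1
    have h0 : 0 < |μ| + |σ| := by linarith [abs_nonneg μ]
    exact mul_pos h0 (by positivity)
  have hd2 : 0 < D2 μ σ c δ := by
    unfold D2
    exact mul_pos (add_pos_of_pos_of_nonneg (pow_pos hd1 2) (by positivity)) (by positivity)
  have hmax : -μ * δ / σ < δ := by
    rw [div_lt_iff_of_neg hσ]
    nlinarith
  have hmin : -δ ≤ -μ * δ / σ := by
    rw [le_div_iff_of_neg hσ]
    nlinarith
  have hne : (Set.Icc (-δ) (-μ * δ / σ)).Nonempty := Set.nonempty_Icc.mpr hmin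
  have hr0 : (0:ℝ) ≤ a + -|c| * δ := by nlinarith
  have hst : a + -|c| * δ ≤ a + |c| * δ := by nlinarith [mul_nonneg hc'.le hδ0.le]
  have hrr : (0:ℝ) < a + |c| * δ := by nlinarith [mul_nonneg hc'.le hδ0.le]
  -- integrability
  have hInt : ∀ uh ∈ Set.Icc (-δ) (-μ * δ / σ),
      IntervalIntegrable (fun θ => Real.exp (-μ * θ) * etaK μ σ c δ uh k θ) volume
        (-(a + |c| * δ)) 0 := by
    intro uh huh
    have hm : MonotoneOn (etaK μ σ c δ uh k) (Set.uIcc (-(a + |c| * δ)) 0) := by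
      intro x hx y hy hxy
      rw [Set.uIcc_of_le (by linarith)] at hy
      exact etaK_mono hδ0 hd1 hd2 huh.1 k hk x y hxy hy.2
    exact hm.intervalIntegrable.continuousOn_mul (by fun_prop)
  -- uniform bound on the |c|-side values
  have hbound : ∀ uh ∈ Set.Icc (-δ) (-μ * δ / σ),
      Ifun μ σ c a δ |c| uh k ≤ δ * Real.exp (|μ| * (a + |c| * δ))
        + |σ| * (δ * Real.exp (|μ| * (a + |c| * δ)) * (a + |c| * δ)) := by
    intro uh huh
    have huha : |uh| ≤ δ := abs_le.mpr ⟨huh.1, le_trans huh.2 hmax.le⟩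
    have hXb : ‖∫ θ in (-(a + |c| * δ))..(0:ℝ), Real.exp (-μ * θ) * etaK μ σ c δ uh k θ‖
        ≤ δ * Real.exp (|μ| * (a + |c| * δ)) * |(0:ℝ) - (-(a + |c| * δ))| := by
      apply intervalIntegral.norm_integral_le_of_norm_le_const
      intro x hx
      rw [Set.uIoc_of_le (by linarith)] at hx
      have hx1 : -(a + |c| * δ) < x := hx.1
      have hx2 : x ≤ 0 := hx.2
      have hexp : Real.exp (-μ * x) ≤ Real.exp (|μ| * (a + |c| * δ)) := by
        apply Real.exp_le_exp.2
        calc -μ * x ≤ |(-μ) * x| := le_abs_self _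
          _ = |μ| * |x| := by rw [abs_mul, abs_neg]
          _ ≤ |μ| * (a + |c| * δ) := by
              apply mul_le_mul_of_nonneg_left _ (abs_nonneg μ)
              rw [abs_of_nonpos hx2]; linarith
      have hη : |etaK μ σ c δ uh k x| ≤ δ :=
        etaK_bdd hδ0 hd1 hd2 huh.1 (le_trans huh.2 hmax.le) k hk x hx2
      rw [Real.norm_eq_abs, abs_mul, Real.abs_exp]
      calc Real.exp (-μ * x) * |etaK μ σ c δ uh k x|
          ≤ Real.exp (|μ| * (a + |c| * δ)) * δ :=
            mul_le_mul hexp hη (abs_nonneg _) (Real.exp_nonneg _)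
        _ = δ * Real.exp (|μ| * (a + |c| * δ)) := mul_comm _ _
    rw [show |(0:ℝ) - (-(a + |c| * δ))| = a + |c| * δ by rw [abs_of_pos (by linarith)]; ring]
      at hXb
    unfold Ifun
    have hterm1 : uh * Real.exp (μ * (a + |c| * δ))
        ≤ δ * Real.exp (|μ| * (a + |c| * δ)) := by
      calc uh * Real.exp (μ * (a + |c| * δ)) ≤ |uh| * Real.exp (μ * (a + |c| * δ)) :=
            mul_le_mul_of_nonneg_right (le_abs_self uh) (Real.exp_nonneg _)
        _ ≤ δ * Real.exp (|μ| * (a + |c| * δ)) := by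
            apply mul_le_mul huha (Real.exp_le_exp.2 ?_) (Real.exp_nonneg _) hδ0.le
            exact mul_le_mul_of_nonneg_right (le_abs_self μ) hrr.le
    have hterm2 : σ * (∫ θ in (-(a + |c| * δ))..(0:ℝ),
          Real.exp (-μ * θ) * etaK μ σ c δ uh k θ)
        ≤ |σ| * (δ * Real.exp (|μ| * (a + |c| * δ)) * (a + |c| * δ)) := by
      calc σ * (∫ θ in (-(a + |c| * δ))..(0:ℝ), Real.exp (-μ * θ) * etaK μ σ c δ uh k θ)
          ≤ |σ * (∫ θ in (-(a + |c| * δ))..(0:ℝ), Real.exp (-μ * θ) * etaK μ σ c δ uh k θ)| :=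
            le_abs_self _
        _ = |σ| * ‖∫ θ in (-(a + |c| * δ))..(0:ℝ), Real.exp (-μ * θ) * etaK μ σ c δ uh k θ‖ := by
            rw [abs_mul, Real.norm_eq_abs]
        _ ≤ |σ| * (δ * Real.exp (|μ| * (a + |c| * δ)) * (a + |c| * δ)) :=
            mul_le_mul_of_nonneg_left hXb (abs_nonneg σ)
    linarith
  have hbddS : BddAbove ((fun uh => Ifun μ σ c a δ |c| uh k) '' Set.Icc (-δ) (-μ * δ / σ)) := by
    refine ⟨δ * Real.exp (|μ| * (a + |c| * δ))
      + |σ| * (δ * Real.exp (|μ| * (a + |c| * δ)) * (a + |c| * δ)), ?_⟩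
    rintro y ⟨uh, huh, rfl⟩
    exact hbound uh huh
  have hkey : ∀ uh ∈ Set.Icc (-δ) (-μ * δ / σ),
      Ifun μ σ c a δ (-|c|) uh k ≤ max (-μ * δ / σ) (Pfun μ σ c a δ k) := by
    intro uh huh
    have hb := key μ σ uh (a + -|c| * δ) (a + |c| * δ) (etaK μ σ c δ uh k) hσ
      (etaK_mono hδ0 hd1 hd2 huh.1 k hk) hr0 hst (hInt uh huh)
    have hb' : Ifun μ σ c a δ (-|c|) uh k ≤ max uh (Ifun μ σ c a δ |c| uh k) := by
      unfold Ifun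
      exact hb
    refine le_trans hb' (max_le_max huh.2 ?_)
    exact le_csSup hbddS ⟨uh, huh, rfl⟩
  refine lt_of_le_of_lt (csSup_le (hne.image _) ?_) (max_lt hmax hP)
  rintro y ⟨uh, huh, rfl⟩
  exact hkey uh huh
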